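/- Let (λ_n)_{n≥1} be a sequence in [0,1] and (a_n), (b_n) sequences of nonnegative reals with a_{n+1} ≤ (1 − λ_{n+1})·a_n + b_n for all n ≥ 1. Suppose (a_n) is bounded above by M ∈ ℤ₊, ∑ b_n converges with Cauchy modulus γ (i.e. s_{γ(δ)+n} − s_{γ(δ)} ≤ δ for all δ > 0 and n ∈ ℕ, where s_n = ∑_{i=1}^n b_i), and ∑_{n=1}^∞ λ_{n+1} diverges with rate of divergence θ. Then for all ε ∈ (0,2) and all n ≥ θ(γ(ε/2) + 1 + ⌈ln(2M/ε)⌉) + 1, we have a_n ≤ ε. -/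

import Mathlib

theorem stmt4 (lam a b : ℕ → ℝ) (M : ℕ) (hM : 0 < M) (γ : ℝ → ℕ) (θ : ℕ → ℕ)
    (hlam : ∀ n, 1 ≤ n → lam n ∈ Set.Icc (0:ℝ) 1)
    (ha0 : ∀ n, 1 ≤ n → 0 ≤ a n) (hb0 : ∀ n, 1 ≤ n → 0 ≤ b n)
    (haM : ∀ n, 1 ≤ n → a n ≤ M)
    (hrec : ∀ n, 1 ≤ n → a (n+1) ≤ (1 - lam (n+1)) * a n + b n)
    (hγ : ∀ δ : ℝ, 0 < δ → ∀ n : ℕ,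
      (∑ i ∈ Finset.Icc 1 (γ δ + n), b i) - (∑ i ∈ Finset.Icc 1 (γ δ), b i) ≤ δ)
    (hθ : ∀ n : ℕ, 1 ≤ n → (n : ℝ) ≤ ∑ k ∈ Finset.Icc 1 (θ n), lam (k+1)) :
    ∀ ε : ℝ, ε ∈ Set.Ioo (0:ℝ) 2 →
      ∀ n, θ (γ (ε/2) + 1 + ⌈Real.log (2 * M / ε)⌉₊) + 1 ≤ n → a n ≤ ε := by
  intro ε hε n hn
  obtain ⟨hε0, hε2⟩ := hε
  set N := γ (ε/2) with hNdef
  set L := ⌈Real.log (2 * M / ε)⌉₊ with hLdef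
  set m₀ := θ (N + 1 + L) with hm₀def
  have hMR : (0:ℝ) < M := by exact_mod_cast hM
  -- Step 1: m₀ ≥ N + 1 + L
  have hsum1 : ((N + 1 + L : ℕ) : ℝ) ≤ ∑ k ∈ Finset.Icc 1 m₀, lam (k+1) :=
    hθ _ (by omega)
  have hcard : (∑ k ∈ Finset.Icc 1 m₀, lam (k+1)) ≤ (m₀ : ℝ) := by
    calc ∑ k ∈ Finset.Icc 1 m₀, lam (k+1)
        ≤ ∑ _k ∈ Finset.Icc 1 m₀, (1:ℝ) :=
          Finset.sum_le_sum (fun k _ => (hlam (k+1) (by omega)).2)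
      _ = (m₀ : ℝ) := by simp
  have hm0ge : N + 1 + L ≤ m₀ := by exact_mod_cast hsum1.trans hcard
  -- Step 2: middle lambda sum large
  have hsplitlam : (∑ k ∈ Finset.Icc 1 N, lam (k+1)) + ∑ k ∈ Finset.Ioc N m₀, lam (k+1)
      = ∑ k ∈ Finset.Icc 1 m₀, lam (k+1) := by
    rw [show (1:ℕ) = 0 + 1 from rfl, Finset.Icc_add_one_left_eq_Ioc, Finset.Icc_add_one_left_eq_Ioc]
    exact Finset.sum_Ioc_consecutive _ (Nat.zero_le N) (by omega)
  have hfirst : (∑ k ∈ Finset.Icc 1 N, lam (k+1)) ≤ (N : ℝ) := by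
    calc ∑ k ∈ Finset.Icc 1 N, lam (k+1)
        ≤ ∑ _k ∈ Finset.Icc 1 N, (1:ℝ) :=
          Finset.sum_le_sum (fun k _ => (hlam (k+1) (by omega)).2)
      _ = (N : ℝ) := by simp
  have hmid : ((L : ℝ) + 1) ≤ ∑ k ∈ Finset.Ioc N m₀, lam (k+1) := by
    have := hsum1
    push_cast at this ⊢
    linarith [hsplitlam, hfirst]
  -- Step 3: induction key lemma
  have key : ∀ j : ℕ, a (N+1+j) ≤
      (∏ k ∈ Finset.Ioc N (N+j), (1 - lam (k+1))) * M
        + ∑ k ∈ Finset.Ioc N (N+j), b k := by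
    intro j
    induction j with
    | zero => simpa using haM (N+1) (by omega)
    | succ j ih =>
      have hr := hrec (N+1+j) (by omega)
      have hl := hlam (N+1+j+1) (by omega)
      obtain ⟨hl0, hl1⟩ := hl
      have hSnn : 0 ≤ ∑ k ∈ Finset.Ioc N (N+j), b k :=
        Finset.sum_nonneg (fun k hk => hb0 k (by
          have := (Finset.mem_Ioc.mp hk).1; omega))
      have hPnn : 0 ≤ ∏ k ∈ Finset.Ioc N (N+j), (1 - lam (k+1)) :=
        Finset.prod_nonneg (fun k hk => by
          have := (hlam (k+1) (by omega)).2; linarith)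
      have hIoc : Finset.Ioc N (N+j+1) = insert (N+j+1) (Finset.Ioc N (N+j)) := by
        ext k; simp [Finset.mem_Ioc, Finset.mem_insert]; omega
      have hnotmem : N+j+1 ∉ Finset.Ioc N (N+j) := by simp
      have hprod : ∏ k ∈ Finset.Ioc N (N+j+1), (1 - lam (k+1))
          = (1 - lam (N+j+1+1)) * ∏ k ∈ Finset.Ioc N (N+j), (1 - lam (k+1)) := by
        rw [hIoc, Finset.prod_insert hnotmem]
      have hsumb : ∑ k ∈ Finset.Ioc N (N+j+1), b k
          = b (N+j+1) + ∑ k ∈ Finset.Ioc N (N+j), b k := by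
        rw [hIoc, Finset.sum_insert hnotmem]
      have hanonneg : 0 ≤ a (N+1+j) := ha0 _ (by omega)
      have h2 : a (N+1+j) ≤ (∏ k ∈ Finset.Ioc N (N+j), (1 - lam (k+1))) * M
          + ∑ k ∈ Finset.Ioc N (N+j), b k := ih
      have e1 : lam (N+1+j+1) = lam (N+j+1+1) := by congr 1; omega
      have e3 : b (N+1+j) = b (N+j+1) := by congr 1; omega
      rw [e1, e3] at hr
      simp only [show N+1+(j+1) = N+1+j+1 from by omega,
        show N+(j+1) = N+j+1 from by omega]
      have t1 : (1 - lam (N+j+1+1)) * a (N+1+j)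
          ≤ (1 - lam (N+j+1+1)) * ((∏ k ∈ Finset.Ioc N (N+j), (1 - lam (k+1))) * M
            + ∑ k ∈ Finset.Ioc N (N+j), b k) :=
        mul_le_mul_of_nonneg_left h2 (by rw [← e1]; linarith)
      have t2 : 0 ≤ lam (N+j+1+1) * ∑ k ∈ Finset.Ioc N (N+j), b k :=
        mul_nonneg (by rw [← e1]; exact hl0) hSnn
      rw [hprod, hsumb]
      nlinarith [t1, t2]
  -- Step 4: assemble
  have hn2 : N + 1 ≤ n - 1 := by omega
  obtain ⟨j, hj⟩ : ∃ j, n = N + 1 + j := ⟨n - (N+1), by omega⟩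
  have hNj : N + j = n - 1 := by omega
  have habound := key j
  rw [← hj] at habound
  -- product bound
  have hprodsplit : (∏ k ∈ Finset.Ioc N m₀, (1 - lam (k+1)))
      * (∏ k ∈ Finset.Ioc m₀ (N+j), (1 - lam (k+1)))
      = ∏ k ∈ Finset.Ioc N (N+j), (1 - lam (k+1)) :=
    Finset.prod_Ioc_consecutive _ (by omega) (by omega)
  have hP1nn : 0 ≤ ∏ k ∈ Finset.Ioc N m₀, (1 - lam (k+1)) :=
    Finset.prod_nonneg (fun k hk => by have := (hlam (k+1) (by omega)).2; linarith)
  have hP2le1 : (∏ k ∈ Finset.Ioc m₀ (N+j), (1 - lam (k+1))) ≤ 1 :=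
    Finset.prod_le_one
      (fun k hk => by have := (hlam (k+1) (by omega)).2; linarith)
      (fun k hk => by have := (hlam (k+1) (by omega)).1; linarith)
  have hP1exp : (∏ k ∈ Finset.Ioc N m₀, (1 - lam (k+1)))
      ≤ Real.exp (-(∑ k ∈ Finset.Ioc N m₀, lam (k+1))) := by
    rw [← Finset.sum_neg_distrib, Real.exp_sum]
    refine Finset.prod_le_prod
      (fun k hk => by have := (hlam (k+1) (by omega)).2; linarith)
      (fun k hk => ?_)
    have := Real.add_one_le_exp (-(lam (k+1)))
    linarith
  have hexple : Real.exp (-(∑ k ∈ Finset.Ioc N m₀, lam (k+1)))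
      ≤ Real.exp (-Real.log (2 * M / ε)) := by
    apply Real.exp_le_exp.mpr
    have hLlog : Real.log (2 * M / ε) ≤ (L : ℝ) := Nat.le_ceil _
    linarith [hmid]
  have h2Mε : (0:ℝ) < 2 * M / ε := by positivity
  have hexpeq : Real.exp (-Real.log (2 * M / ε)) = ε / (2 * M) := by
    rw [Real.exp_neg, Real.exp_log h2Mε, inv_div]
  have hPle : (∏ k ∈ Finset.Ioc N (N+j), (1 - lam (k+1))) ≤ ε / (2 * M) := by
    rw [← hprodsplit]
    have h1 : (∏ k ∈ Finset.Ioc N m₀, (1 - lam (k+1))) ≤ ε / (2*M) := by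
      rw [← hexpeq]; exact hP1exp.trans hexple
    have hP2nn : 0 ≤ ∏ k ∈ Finset.Ioc m₀ (N+j), (1 - lam (k+1)) :=
      Finset.prod_nonneg (fun k hk => by have := (hlam (k+1) (by omega)).2; linarith)
    nlinarith [hP1nn]
  -- sum bound
  have hsumble : (∑ k ∈ Finset.Ioc N (N+j), b k) ≤ ε / 2 := by
    have hg := hγ (ε/2) (by linarith) j
    have hsplit : (∑ i ∈ Finset.Icc 1 N, b i) + ∑ i ∈ Finset.Ioc N (N+j), b i
        = ∑ i ∈ Finset.Icc 1 (N+j), b i := by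
      rw [show (1:ℕ) = 0 + 1 from rfl, Finset.Icc_add_one_left_eq_Ioc, Finset.Icc_add_one_left_eq_Ioc]
      exact Finset.sum_Ioc_consecutive _ (Nat.zero_le N) (by omega)
    rw [← hNdef] at hg
    linarith [hg, hsplit]
  have hfinal : (∏ k ∈ Finset.Ioc N (N+j), (1 - lam (k+1))) * M
      ≤ ε / (2 * M) * M := by
    exact mul_le_mul_of_nonneg_right hPle (le_of_lt hMR)
  have : ε / (2 * M) * M = ε / 2 := by field_simp
  linarith [habound, hfinal, hsumble]
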